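/- arXiv:1407.4174 — 2 statements merged into one kernel-verified Lean document; each statement's English description precedes it below -/
import Mathlib

section
/- Let (X, 𝓑, μ) be a finite measure space and let 𝓜 ⊆ 𝓑 be non-empty and closed under countable nested unions (i.e. if M_i ∈ 𝓜 with M_i ⊆ M_{i+1} for all i, then ⋃_{i=1}^∞ M_i ∈ 𝓜). Then there exists M ∈ 𝓜 such that μ(M) = μ(M′) for every M′ ∈ 𝓜 with M ⊆ M′. -/
open MeasureTheory

/-- If `(X, 𝓑, μ)` is a finite measure space and `𝓜 ⊆ 𝓑` is non-empty and closed under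
countable nested unions, then there exists `M ∈ 𝓜` such that `μ(M) = μ(M')` for every
`M' ∈ 𝓜` containing `M`. -/
theorem exists_measure_maximal_of_closed_under_nested_unions {X : Type*}
    [MeasurableSpace X] (μ : Measure X) [IsFiniteMeasure μ]
    (𝓜 : Set (Set X)) (h𝓜 : ∀ S ∈ 𝓜, MeasurableSet S) (hne : 𝓜.Nonempty)
    (hchain : ∀ f : ℕ → Set X, (∀ i, f i ∈ 𝓜) → (∀ i, f i ⊆ f (i + 1)) →
      (⋃ i, f i) ∈ 𝓜) :
    ∃ M ∈ 𝓜, ∀ M' ∈ 𝓜, M ⊆ M' → μ M = μ M' := by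
  -- the supremum of measures of supersets of `A` inside `𝓜`
  set S : Set X → ENNReal := fun A => ⨆ B ∈ {B | B ∈ 𝓜 ∧ A ⊆ B}, μ B with hSdef
  have hle : ∀ A B, B ∈ 𝓜 → A ⊆ B → μ B ≤ S A := by
    intro A B hB hAB
    exact le_biSup (f := fun B => μ B) (s := {B | B ∈ 𝓜 ∧ A ⊆ B}) ⟨hB, hAB⟩
  have hStop : ∀ A, S A ≤ μ Set.univ := by
    intro A
    apply iSup₂_le
    intro B _
    exact measure_mono (Set.subset_univ B)
  have hSne : ∀ A, S A ≠ ⊤ := fun A =>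
    ne_top_of_le_ne_top (measure_ne_top μ _) (hStop A)
  -- key approximation step
  have key : ∀ A, A ∈ 𝓜 → ∀ n : ℕ, ∃ B, B ∈ 𝓜 ∧ A ⊆ B ∧ S A ≤ μ B + 2⁻¹ ^ n := by
    intro A hA n
    by_contra h
    push_neg at h
    have h' : ∀ B ∈ {B | B ∈ 𝓜 ∧ A ⊆ B}, μ B ≤ S A - 2⁻¹ ^ n := by
      rintro B ⟨hB, hAB⟩
      have := (h B hB hAB)
      exact ENNReal.le_sub_of_add_le_right (by simp) this.le
    have h1 : S A ≤ S A - 2⁻¹ ^ n := iSup₂_le h'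
    have h0 : S A ≠ 0 := by
      intro h0
      have := h A hA subset_rfl
      rw [h0] at this
      exact absurd this (by simp)
    have h2 : S A - 2⁻¹ ^ n < S A :=
      ENNReal.sub_lt_self (hSne A) h0 (pow_ne_zero n (by norm_num))
    exact absurd (lt_of_le_of_lt h1 h2) (lt_irrefl _)
  choose g hg1 hg2 hg3 using key
  classical
  -- recursively defined nested sequence
  set f : ℕ → Set X := fun n =>
    Nat.rec hne.choose (fun n A => if h : A ∈ 𝓜 then g A h n else A) n with hf
  have hmem : ∀ n, f n ∈ 𝓜 := by
    intro n
    induction n with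
    | zero => exact hne.choose_spec
    | succ n ih =>
      show (if h : f n ∈ 𝓜 then g (f n) h n else f n) ∈ 𝓜
      rw [dif_pos ih]; exact hg1 _ ih n
  have hsucc : ∀ n, f (n + 1) = g (f n) (hmem n) n := by
    intro n
    show (if h : f n ∈ 𝓜 then g (f n) h n else f n) = _
    rw [dif_pos (hmem n)]
  have hsub : ∀ n, f n ⊆ f (n + 1) := by
    intro n; rw [hsucc n]; exact hg2 _ (hmem n) n
  have hS : ∀ n, S (f n) ≤ μ (f (n + 1)) + 2⁻¹ ^ n := by
    intro n; rw [hsucc n]; exact hg3 _ (hmem n) n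
  refine ⟨⋃ n, f n, hchain f hmem hsub, ?_⟩
  intro M' hM' hMM'
  have hsubM : ∀ n, f n ⊆ ⋃ n, f n := fun n => Set.subset_iUnion f n
  refine le_antisymm (measure_mono hMM') ?_
  -- μ M' ≤ μ M + 2⁻¹ ^ n for every n
  have hbound : ∀ n : ℕ, μ M' ≤ μ (⋃ n, f n) + 2⁻¹ ^ n := by
    intro n
    calc μ M' ≤ S (f n) := hle (f n) M' hM' ((hsubM n).trans hMM')
      _ ≤ μ (f (n + 1)) + 2⁻¹ ^ n := hS n
      _ ≤ μ (⋃ n, f n) + 2⁻¹ ^ n := add_le_add_left (measure_mono (hsubM (n + 1))) _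
  refine ENNReal.le_of_forall_pos_le_add ?_
  intro ε hε _
  obtain ⟨n, hn⟩ := ENNReal.exists_inv_two_pow_lt (ENNReal.coe_ne_zero.2 hε.ne')
  exact (hbound n).trans (add_le_add_right hn.le _)
end

section
/- Let G and G′ be countable groups acting on probability spaces (X, 𝓑, μ) and (X′, 𝓑′, μ′) respectively, and consider the product action of G ⊕ G′ on (X × X′, 𝓑 ⊗ 𝓑′, μ × μ′) given by (g, g′)·(x, x′) = (g·x, g′·x′). Then for A ⊆ G, A′ ⊆ G′ and measurable B ⊆ X, B′ ⊆ X′ with μ(B) > 0 and μ′(B′) > 0, one has c(A, B) · c(A′, B′) = c(A × A′, B × B′). -/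
open Filter MeasureTheory Pointwise ENNReal

/-- The product action `(g, g') • (x, x') = (g • x, g' • x')`. -/
instance prodSMul {G G' X X' : Type*} [SMul G X] [SMul G' X'] :
    SMul (G × G') (X × X') :=
  ⟨fun p q => (p.1 • q.1, p.2 • q.2)⟩

/-- The magnification ratio `c(A, B) = inf { μ(A B') / μ(B') : B' ⊆ B measurable, μ(B') > 0 }`,
where `A B' = ⋃_{a ∈ A} a • B'`. -/
noncomputable def magRatio {G X : Type*} [SMul G X] [MeasurableSpace X]
    (μ : Measure X) (A : Set G) (B : Set X) : ℝ≥0∞ :=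
  sInf {r : ℝ≥0∞ | ∃ B' : Set X, B' ⊆ B ∧ MeasurableSet B' ∧ 0 < μ B' ∧
    r = μ (A • B') / μ B'}

section aux

variable {G X : Type*} [Group G] [MulAction G X] [MeasurableSpace X]

lemma smulSet_eq_preimage (g : G) (S : Set X) :
    g • S = (fun x => g⁻¹ • x) ⁻¹' S :=
  Set.ext fun _ => Set.mem_smul_set_iff_inv_smul_mem

lemma measurableSet_smulSet (hmeas : ∀ g : G, Measurable (fun x : X => g • x))
    (g : G) {S : Set X} (hS : MeasurableSet S) : MeasurableSet (g • S) := by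
  rw [smulSet_eq_preimage]; exact (hmeas g⁻¹) hS

lemma measurableSet_setSMul [Countable G]
    (hmeas : ∀ g : G, Measurable (fun x : X => g • x))
    (A : Set G) {S : Set X} (hS : MeasurableSet S) : MeasurableSet (A • S) := by
  rw [← Set.iUnion_smul_set]
  exact MeasurableSet.biUnion (Set.to_countable A)
    (fun g _ => measurableSet_smulSet hmeas g hS)

lemma magRatio_mul_le (μ : Measure X) [IsFiniteMeasure μ]
    (A : Set G) (B : Set X) {S : Set X} (hSB : S ⊆ B) (hS : MeasurableSet S) :
    magRatio μ A B * μ S ≤ μ (A • S) := by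
  rcases eq_or_ne (μ S) 0 with h0 | h0
  · simp [h0]
  · have hle : magRatio μ A B ≤ μ (A • S) / μ S :=
      sInf_le ⟨S, hSB, hS, pos_iff_ne_zero.2 h0, rfl⟩
    calc magRatio μ A B * μ S ≤ μ (A • S) / μ S * μ S :=
          mul_le_mul_left hle _
      _ = μ (A • S) := ENNReal.div_mul_cancel h0 (measure_ne_top μ S)

end aux

/-- layer cake comparison -/
lemma lintegral_le_of_meas_lt {α β : Type*} [MeasurableSpace α] [MeasurableSpace β]
    (μ : Measure α) (ν : Measure β) (c : ℝ≥0∞)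
    {f : α → ℝ≥0∞} {g : β → ℝ≥0∞} (hf : Measurable f) (hg : Measurable g)
    (hf1 : ∀ x, f x ≠ ∞) (hg1 : ∀ y, g y ≠ ∞)
    (h : ∀ t : ℝ≥0∞, 0 < t → c * μ {x | t < f x} ≤ ν {y | t < g y}) :
    c * ∫⁻ x, f x ∂μ ≤ ∫⁻ y, g y ∂ν := by
  have hfr : ∫⁻ x, f x ∂μ = ∫⁻ x, ENNReal.ofReal ((f x).toReal) ∂μ := by
    refine lintegral_congr fun x => ?_
    rw [ENNReal.ofReal_toReal (hf1 x)]
  have hgr : ∫⁻ y, g y ∂ν = ∫⁻ y, ENNReal.ofReal ((g y).toReal) ∂ν := by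
    refine lintegral_congr fun y => ?_
    rw [ENNReal.ofReal_toReal (hg1 y)]
  rw [hfr, hgr,
    lintegral_eq_lintegral_meas_lt μ (Eventually.of_forall fun x => ENNReal.toReal_nonneg)
      hf.ennreal_toReal.aemeasurable,
    lintegral_eq_lintegral_meas_lt ν (Eventually.of_forall fun y => ENNReal.toReal_nonneg)
      hg.ennreal_toReal.aemeasurable]
  refine le_trans (lintegral_const_mul_le c _) ?_
  refine lintegral_mono_ae ?_
  filter_upwards [ae_restrict_mem measurableSet_Ioi] with t ht
  have ht0 : (0:ℝ) < t := ht
  have hsetf : {x | t < (f x).toReal} = {x | ENNReal.ofReal t < f x} := by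
    ext x
    exact (ENNReal.ofReal_lt_iff_lt_toReal ht0.le (hf1 x)).symm
  have hsetg : {y | t < (g y).toReal} = {y | ENNReal.ofReal t < g y} := by
    ext y
    exact (ENNReal.ofReal_lt_iff_lt_toReal ht0.le (hg1 y)).symm
  rw [hsetf, hsetg]
  exact h _ (ENNReal.ofReal_pos.2 ht0)

section prodaux

variable {G G' X X' : Type*} [Group G] [Group G'] [MulAction G X] [MulAction G' X']

lemma prod_smulSet_eq_preimage (p : G × G') (E : Set (X × X')) :
    p • E = (fun q : X × X' => (p.1⁻¹ • q.1, p.2⁻¹ • q.2)) ⁻¹' E := by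
  ext q
  simp only [Set.mem_smul_set, Set.mem_preimage]
  constructor
  · rintro ⟨e, he, rfl⟩
    show (p.1⁻¹ • (p.1 • e.1), p.2⁻¹ • (p.2 • e.2)) ∈ E
    simpa [inv_smul_smul] using he
  · intro hq
    exact ⟨(p.1⁻¹ • q.1, p.2⁻¹ • q.2), hq, by
      show (p.1 • p.1⁻¹ • q.1, p.2 • p.2⁻¹ • q.2) = q
      simp [smul_inv_smul]⟩

lemma prod_smul_prod (A : Set G) (A' : Set G') (S : Set X) (T : Set X') :
    (A ×ˢ A') • (S ×ˢ T) = (A • S) ×ˢ (A' • T) := by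
  ext ⟨x, x'⟩
  simp only [Set.mem_smul, Set.mem_prod]
  constructor
  · rintro ⟨⟨a, a'⟩, ⟨hA, hA'⟩, ⟨s, t⟩, ⟨hs, ht⟩, h⟩
    have h1 : a • s = x := congrArg Prod.fst h
    have h2 : a' • t = x' := congrArg Prod.snd h
    exact ⟨⟨a, hA, s, hs, h1⟩, ⟨a', hA', t, ht, h2⟩⟩
  · rintro ⟨⟨a, hA, s, hs, h1⟩, ⟨a', hA', t, ht, h2⟩⟩
    exact ⟨(a, a'), ⟨hA, hA'⟩, (s, t), ⟨hs, ht⟩, by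
      show (a • s, a' • t) = (x, x'); rw [h1, h2]⟩

end prodaux

/-- Multiplicativity of magnification ratios: if countable groups `G, G'` act on
probability spaces `(X, μ)` and `(X', μ')` by measure preserving maps, then for `A ⊆ G`,
`A' ⊆ G'` and non-null measurable `B ⊆ X`, `B' ⊆ X'`, the product action of `G × G'` on
`(X × X', μ × μ')` satisfies `c(A, B) · c(A', B') = c(A × A', B × B')`. -/
theorem magRatio_prod {G G' X X' : Type*} [Group G] [Group G'] [Countable G] [Countable G']
    [MulAction G X] [MulAction G' X'] [MeasurableSpace X] [MeasurableSpace X']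
    (μ : Measure X) (μ' : Measure X')
    [IsProbabilityMeasure μ] [IsProbabilityMeasure μ']
    (hmeas : ∀ g : G, Measurable (fun x : X => g • x))
    (hinv : ∀ (g : G) (S : Set X), MeasurableSet S → μ (g • S) = μ S)
    (hmeas' : ∀ g : G', Measurable (fun x : X' => g • x))
    (hinv' : ∀ (g : G') (S : Set X'), MeasurableSet S → μ' (g • S) = μ' S)
    (A : Set G) (A' : Set G') (B : Set X) (B' : Set X')
    (hB : MeasurableSet B) (hB' : MeasurableSet B')
    (hB0 : 0 < μ B) (hB'0 : 0 < μ' B') :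
    magRatio μ A B * magRatio μ' A' B' = magRatio (μ.prod μ') (A ×ˢ A') (B ×ˢ B') := by
  set Sset : Set ℝ≥0∞ := {r : ℝ≥0∞ | ∃ B₀ : Set X, B₀ ⊆ B ∧ MeasurableSet B₀ ∧ 0 < μ B₀ ∧
    r = μ (A • B₀) / μ B₀} with hSset
  set S'set : Set ℝ≥0∞ := {r : ℝ≥0∞ | ∃ B₀ : Set X', B₀ ⊆ B' ∧ MeasurableSet B₀ ∧ 0 < μ' B₀ ∧
    r = μ' (A' • B₀) / μ' B₀} with hS'set
  have hcS : magRatio μ A B = sInf Sset := rfl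
  have hcS' : magRatio μ' A' B' = sInf S'set := rfl
  have hmem0 : μ (A • B) / μ B ∈ Sset := ⟨B, subset_rfl, hB, hB0, rfl⟩
  have hmem0' : μ' (A' • B') / μ' B' ∈ S'set := ⟨B', subset_rfl, hB', hB'0, rfl⟩
  have hfin : ∀ r ∈ Sset, r ≠ ∞ := by
    rintro r ⟨E, _, _, hE0, rfl⟩
    exact (ENNReal.div_lt_top (measure_ne_top _ _) hE0.ne').ne
  have hfin' : ∀ r ∈ S'set, r ≠ ∞ := by
    rintro r ⟨E, _, _, hE0, rfl⟩
    exact (ENNReal.div_lt_top (measure_ne_top _ _) hE0.ne').ne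
  have hcfin : magRatio μ A B ≠ ∞ := by
    rw [hcS]
    exact fun h => hfin _ hmem0 (top_le_iff.1 (h ▸ sInf_le hmem0))
  have hc'fin : magRatio μ' A' B' ≠ ∞ := by
    rw [hcS']
    exact fun h => hfin' _ hmem0' (top_le_iff.1 (h ▸ sInf_le hmem0'))
  -- measurability of (A ×ˢ A') • E
  have hFmeas : ∀ E : Set (X × X'), MeasurableSet E → MeasurableSet ((A ×ˢ A') • E) := by
    intro E hE
    rw [← Set.iUnion_smul_set]
    refine MeasurableSet.biUnion (Set.to_countable _) fun p _ => ?_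
    rw [prod_smulSet_eq_preimage]
    exact (((hmeas p.1⁻¹).comp measurable_fst).prodMk
      ((hmeas' p.2⁻¹).comp measurable_snd)) hE
  -- the key inequality
  have key : ∀ E : Set (X × X'), E ⊆ B ×ˢ B' → MeasurableSet E →
      magRatio μ A B * magRatio μ' A' B' * (μ.prod μ') E ≤ (μ.prod μ') ((A ×ˢ A') • E) := by
    intro E hEB hE
    set F := (A ×ˢ A') • E with hF
    have hFm : MeasurableSet F := hFmeas E hE
    set f : X → ℝ≥0∞ := fun x => μ' (Prod.mk x ⁻¹' E) with hf
    have hfm : Measurable f := measurable_measure_prodMk_left hE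
    set s : X → ℝ≥0∞ := fun y => ⨆ a : A, f ((a : G)⁻¹ • y) with hs
    have hsm : Measurable s := Measurable.iSup fun a => hfm.comp (hmeas (a : G)⁻¹)
    have claim1 : ∀ y, magRatio μ' A' B' * s y ≤ μ' (Prod.mk y ⁻¹' F) := by
      intro y
      rw [hs, ENNReal.mul_iSup]
      refine iSup_le fun a => ?_
      have hsec : MeasurableSet (Prod.mk ((a : G)⁻¹ • y) ⁻¹' E) :=
        measurable_prodMk_left hE
      have hsub : Prod.mk ((a : G)⁻¹ • y) ⁻¹' E ⊆ B' := fun x' hx' => (hEB hx').2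
      refine le_trans (magRatio_mul_le μ' A' B' hsub hsec) (measure_mono ?_)
      intro x' hx'
      obtain ⟨a', ha', z', hz', rfl⟩ := Set.mem_smul.1 hx'
      have hmemF : ((a : G), a') • (((a : G)⁻¹ • y), z') ∈ F :=
        Set.smul_mem_smul (Set.mk_mem_prod a.2 ha') hz'
      have heq : ((a : G), a') • (((a : G)⁻¹ • y), z') = (y, a' • z') := by
        show ((a : G) • ((a : G)⁻¹ • y), a' • z') = (y, a' • z')
        rw [smul_inv_smul]
      rw [heq] at hmemF
      exact hmemF
    have claim2 : magRatio μ A B * ∫⁻ x, f x ∂μ ≤ ∫⁻ y, s y ∂μ := by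
      refine lintegral_le_of_meas_lt μ μ (magRatio μ A B) hfm hsm
        (fun x => measure_ne_top _ _)
        (fun y => (iSup_le fun a => prob_le_one : s y ≤ 1).trans_lt one_lt_top |>.ne)
        ?_
      intro t ht
      have hmeasset : MeasurableSet {x | t < f x} :=
        measurableSet_lt measurable_const hfm
      have hsubB : {x | t < f x} ⊆ B := by
        intro x hx
        rcases Set.eq_empty_or_nonempty (Prod.mk x ⁻¹' E) with he | ⟨x', hx'⟩
        · exfalso
          have hfx : f x = 0 := by rw [hf]; simp [he]
          rw [Set.mem_setOf_eq, hfx] at hx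
          exact absurd hx (by simp)
        · exact (hEB hx').1
      refine le_trans (magRatio_mul_le μ A B hsubB hmeasset) (measure_mono ?_)
      intro y hy
      obtain ⟨a, ha, x, hx, rfl⟩ := Set.mem_smul.1 hy
      have hx' : t < f x := hx
      refine lt_of_lt_of_le hx' ?_
      have hle := le_iSup (fun a' : A => f ((a' : G)⁻¹ • (a • x))) ⟨a, ha⟩
      simpa [inv_smul_smul] using hle
    calc magRatio μ A B * magRatio μ' A' B' * (μ.prod μ') E = magRatio μ' A' B' * (magRatio μ A B * ∫⁻ x, f x ∂μ) := by
          rw [Measure.prod_apply hE]; ring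
      _ ≤ magRatio μ' A' B' * ∫⁻ y, s y ∂μ := mul_le_mul_right claim2 _
      _ ≤ ∫⁻ y, magRatio μ' A' B' * s y ∂μ := lintegral_const_mul_le _ s
      _ ≤ ∫⁻ y, μ' (Prod.mk y ⁻¹' F) ∂μ := lintegral_mono claim1
      _ = (μ.prod μ') F := (Measure.prod_apply hFm).symm
  -- direction 1
  have le1 : magRatio μ A B * magRatio μ' A' B' ≤ magRatio (μ.prod μ') (A ×ˢ A') (B ×ˢ B') := by
    refine le_sInf ?_
    rintro r ⟨E, hEB, hE, hE0, rfl⟩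
    rw [ENNReal.le_div_iff_mul_le (Or.inl hE0.ne') (Or.inl (measure_ne_top _ _))]
    exact key E hEB hE
  -- direction 2
  have rect : ∀ r ∈ Sset, ∀ r' ∈ S'set,
      magRatio (μ.prod μ') (A ×ˢ A') (B ×ˢ B') ≤ r * r' := by
    rintro r ⟨S₀, hS₀B, hS₀m, hS₀0, rfl⟩ r' ⟨T₀, hT₀B, hT₀m, hT₀0, rfl⟩
    refine sInf_le ⟨S₀ ×ˢ T₀, Set.prod_mono hS₀B hT₀B, hS₀m.prod hT₀m, ?_, ?_⟩
    · rw [Measure.prod_prod]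
      exact ENNReal.mul_pos hS₀0.ne' hT₀0.ne'
    · rw [prod_smul_prod, Measure.prod_prod, Measure.prod_prod,
        div_eq_mul_inv, div_eq_mul_inv, div_eq_mul_inv,
        ENNReal.mul_inv (Or.inl hS₀0.ne') (Or.inl (measure_ne_top μ S₀))]
      ring
  have le2 : magRatio (μ.prod μ') (A ×ˢ A') (B ×ˢ B') ≤ magRatio μ A B * magRatio μ' A' B' := by
    haveI : Nonempty Sset := Set.Nonempty.to_subtype ⟨_, hmem0⟩
    haveI : Nonempty S'set := Set.Nonempty.to_subtype ⟨_, hmem0'⟩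
    have h1 : ∀ r : Sset, magRatio (μ.prod μ') (A ×ˢ A') (B ×ˢ B') ≤ (r : ℝ≥0∞) * magRatio μ' A' B' := by
      intro r
      calc magRatio (μ.prod μ') (A ×ˢ A') (B ×ˢ B')
          ≤ ⨅ r' : S'set, (r : ℝ≥0∞) * (r' : ℝ≥0∞) :=
            le_iInf fun r' => rect r r.2 r' r'.2
        _ = (r : ℝ≥0∞) * ⨅ r' : S'set, (r' : ℝ≥0∞) :=
            (ENNReal.mul_iInf fun h => absurd h (hfin r r.2)).symm
        _ = (r : ℝ≥0∞) * magRatio μ' A' B' := by rw [hcS', sInf_eq_iInf']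
    calc magRatio (μ.prod μ') (A ×ˢ A') (B ×ˢ B')
        ≤ ⨅ r : Sset, (r : ℝ≥0∞) * magRatio μ' A' B' := le_iInf h1
      _ = (⨅ r : Sset, (r : ℝ≥0∞)) * magRatio μ' A' B' :=
          (ENNReal.iInf_mul fun h => absurd h hc'fin).symm
      _ = magRatio μ A B * magRatio μ' A' B' := by rw [hcS, sInf_eq_iInf']
  exact le_antisymm le1 le2
end
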